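/- Let G be a connected acyclic simple graph in which every vertex has countably infinite degree, and let a, b be adjacent vertices of G. Then the set { f a | f is a graph automorphism of G with f b = b } is infinite. -/

import Mathlib

namespace TreeOrbitAux

open SimpleGraph Walk

variable {V : Type*} {G : SimpleGraph V}

lemma concat_isPath_iff' {u v x : V} (p : G.Walk u v) (h : G.Adj v x) :
    (p.concat h).IsPath ↔ p.IsPath ∧ x ∉ p.support := by
  rw [← isPath_reverse_iff, reverse_concat, cons_isPath_iff, isPath_reverse_iff,
    support_reverse, List.mem_reverse]

lemma getVert_mem_support' {u v : V} (p : G.Walk u v) (i : ℕ) :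
    p.getVert i ∈ p.support := by
  induction p generalizing i with
  | nil => simp [Walk.getVert]
  | cons h q ih =>
    cases i with
    | zero => simp [Walk.getVert]
    | succ n => simp only [Walk.getVert, support_cons, List.mem_cons]; exact Or.inr (ih n)

/-- In an acyclic graph, if `x` lies on a path ending at `v` and is adjacent to `v`,
then `x` is the penultimate vertex of the path. -/
lemma exists_concat_of_adj_mem_support (hacyc : G.IsAcyclic) {u v x : V}
    {p : G.Walk u v} (hp : p.IsPath) (h : G.Adj v x) (hx : x ∈ p.support) :
    ∃ q : G.Walk u x, q.IsPath ∧ p = q.concat h.symm := by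
  classical
  have hq : (p.takeUntil x hx).IsPath := hp.takeUntil hx
  have hvq : v ∉ (p.takeUntil x hx).support := by
    intro hv
    have hnd : p.support.Nodup := hp.support_nodup
    rw [← p.take_spec hx, support_append, List.nodup_append] at hnd
    have hvtail : v ∈ (p.dropUntil x hx).support.tail := by
      have hvmem : v ∈ (p.dropUntil x hx).support := end_mem_support _
      rw [support_eq_cons, List.mem_cons] at hvmem
      rcases hvmem with h1 | h2
      · exact absurd h1 h.ne
      · exact h2
    exact hnd.2.2 _ hv _ hvtail rfl
  have hrp : ((p.takeUntil x hx).concat h.symm).IsPath :=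
    (concat_isPath_iff' _ _).2 ⟨hq, hvq⟩
  refine ⟨p.takeUntil x hx, hq, ?_⟩
  exact Subtype.ext_iff.mp (hacyc.path_unique ⟨p, hp⟩ ⟨_, hrp⟩)

/-- Penultimate vertex of a walk (for `nil` this is the start vertex). -/
def pen {u v : V} (p : G.Walk u v) : V := p.reverse.getVert 1

lemma pen_nil {u : V} : pen (Walk.nil : G.Walk u u) = u := rfl

lemma pen_concat {u v x : V} (p : G.Walk u v) (h : G.Adj v x) :
    pen (p.concat h) = v := by
  simp only [pen, reverse_concat, getVert_cons_succ, getVert_zero]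

lemma pen_copy {u v u' v' : V} (p : G.Walk u v) (hu : u = u') (hv : v = v') :
    pen (p.copy hu hv) = pen p := by
  subst hu hv; rfl

lemma pen_mem_support {u v : V} (p : G.Walk u v) : pen p ∈ p.support := by
  have := getVert_mem_support' p.reverse 1
  rwa [support_reverse, List.mem_reverse] at this

section Tree

variable (G)
variable (b : V) (e : ∀ v p : V, ℕ ≃ ↥(G.neighborSet v \ {p}))

/-- Address interpretation: `(gp l).1` is the vertex with address `l` (root `b`),
`(gp l).2` is its parent (`b` itself for the root). -/
def gp : List ℕ → V × V
  | [] => (b, b)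
  | n :: l => ((e (gp l).1 (gp l).2 n : V), (gp l).1)

lemma gp_adj (n : ℕ) (l : List ℕ) :
    G.Adj (gp G b e l).1 (gp G b e (n :: l)).1 :=
  ((e (gp G b e l).1 (gp G b e l).2 n).2.1 : _)

lemma gp_ne_parent (n : ℕ) (l : List ℕ) :
    (gp G b e (n :: l)).1 ≠ (gp G b e l).2 := by
  have := (e (gp G b e l).1 (gp G b e l).2 n).2.2
  simpa [gp] using this

/-- The walk from the root `b` to the vertex with address `l`. -/
def gw : (l : List ℕ) → G.Walk b (gp G b e l).1
  | [] => Walk.nil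
  | n :: l => (gw l).concat (gp_adj G b e n l)

lemma gw_length (l : List ℕ) : (gw G b e l).length = l.length := by
  induction l with
  | nil => rfl
  | cons n l ih => simp [gw, length_concat, ih]

lemma pen_gw_nil : pen (gw G b e []) = b := pen_nil

lemma pen_gw_cons (n : ℕ) (l : List ℕ) :
    pen (gw G b e (n :: l)) = (gp G b e l).1 := pen_concat _ _

lemma gw_pen (l : List ℕ) : pen (gw G b e l) = (gp G b e l).2 := by
  cases l with
  | nil => exact pen_gw_nil G b e
  | cons n l => exact pen_gw_cons G b e n l

lemma gw_isPath (hacyc : G.IsAcyclic) (l : List ℕ) : (gw G b e l).IsPath := by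
  induction l with
  | nil => exact IsPath.nil
  | cons n l ih =>
    rw [show gw G b e (n :: l) = (gw G b e l).concat (gp_adj G b e n l) from rfl,
      concat_isPath_iff']
    refine ⟨ih, fun hmem => ?_⟩
    obtain ⟨q, hq, heq⟩ :=
      exists_concat_of_adj_mem_support hacyc ih (gp_adj G b e n l) hmem
    have : pen (gw G b e l) = (gp G b e (n :: l)).1 := by
      rw [heq, pen_concat]
    rw [gw_pen] at this
    exact gp_ne_parent G b e n l this.symm

lemma gp_inj (hacyc : G.IsAcyclic) :
    ∀ l m : List ℕ, (gp G b e l).1 = (gp G b e m).1 → l = m := by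
  intro l
  induction l with
  | nil =>
    intro m h
    cases m with
    | nil => rfl
    | cons n' m =>
      exfalso
      have hp : ((gw G b e (n' :: m)).copy rfl h.symm).IsPath := by
        rw [isPath_copy]; exact gw_isPath G b e hacyc _
      have := isPath_iff_eq_nil.mp hp
      have hlen := congrArg Walk.length this
      rw [length_copy, gw_length] at hlen
      exact Nat.succ_ne_zero _ hlen
  | cons n l ih =>
    intro m h
    cases m with
    | nil =>
      exfalso
      have hp : ((gw G b e (n :: l)).copy rfl h).IsPath := by
        rw [isPath_copy]; exact gw_isPath G b e hacyc _
      have := isPath_iff_eq_nil.mp hp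
      have hlen := congrArg Walk.length this
      rw [length_copy, gw_length] at hlen
      exact Nat.succ_ne_zero _ hlen
    | cons n' m =>
      have huniq : (gw G b e (n :: l)).copy rfl h = gw G b e (n' :: m) := by
        refine Subtype.ext_iff.mp
          (hacyc.path_unique (v := b) (w := (gp G b e (n' :: m)).1)
            ⟨(gw G b e (n :: l)).copy rfl h, ?_⟩ ⟨_, gw_isPath G b e hacyc _⟩)
        rw [isPath_copy]; exact gw_isPath G b e hacyc _
      have hpen : (gp G b e l).1 = (gp G b e m).1 := by
        have := congrArg pen huniq
        rwa [pen_copy, pen_gw_cons, pen_gw_cons] at this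
      have hlm : l = m := ih m hpen
      subst hlm
      have hval : (e (gp G b e l).1 (gp G b e l).2 n : V)
          = (e (gp G b e l).1 (gp G b e l).2 n' : V) := h
      have : n = n' :=
        (e (gp G b e l).1 (gp G b e l).2).injective (Subtype.coe_injective hval)
      rw [this]

lemma gp_surj_aux (hacyc : G.IsAcyclic) {u v : V} (p : G.Walk u v) :
    u = b → p.IsPath → ∃ l, (gp G b e l).1 = v := by
  induction p using Walk.concatRec with
  | Hnil => intro h _; exact ⟨[], h.symm⟩
  | @Hconcat u v w p h ih =>
    intro hu hp
    rw [concat_isPath_iff'] at hp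
    obtain ⟨hp, hw⟩ := hp
    obtain ⟨l, hl⟩ := ih hu hp
    have hcopy : p.copy hu hl.symm = gw G b e l := by
      refine Subtype.ext_iff.mp
        (hacyc.path_unique (v := b) (w := (gp G b e l).1)
          ⟨p.copy hu hl.symm, ?_⟩ ⟨_, gw_isPath G b e hacyc _⟩)
      rw [isPath_copy]; exact hp
    have hwne : w ≠ (gp G b e l).2 := by
      intro hweq
      have hpen : pen p = (gp G b e l).2 := by
        have := congrArg pen hcopy
        rwa [pen_copy, gw_pen] at this
      have : w ∈ p.support := by
        rw [hweq, ← hpen]; exact pen_mem_support p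
      exact hw this
    have hmem : w ∈ G.neighborSet (gp G b e l).1 \ {(gp G b e l).2} :=
      ⟨by rw [SimpleGraph.mem_neighborSet, hl]; exact h, hwne⟩
    refine ⟨(e (gp G b e l).1 (gp G b e l).2).symm ⟨w, hmem⟩ :: l, ?_⟩
    show ((e (gp G b e l).1 (gp G b e l).2)
      ((e (gp G b e l).1 (gp G b e l).2).symm ⟨w, hmem⟩) : V) = w
    rw [Equiv.apply_symm_apply]

lemma gp_surj (hacyc : G.IsAcyclic) (hconn : G.Connected) (v : V) :
    ∃ l, (gp G b e l).1 = v := by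
  classical
  obtain ⟨p⟩ := hconn.preconnected b v
  exact gp_surj_aux G b e hacyc p.toPath.1 rfl p.toPath.2

lemma adj_reflect (hacyc : G.IsAcyclic) {l m : List ℕ}
    (h : G.Adj (gp G b e l).1 (gp G b e m).1) :
    (∃ n, l = n :: m) ∨ (∃ n, m = n :: l) := by
  by_cases hpath : ((gw G b e l).concat h).IsPath
  · -- then this path is the canonical path to `m`'s vertex
    have huniq : (gw G b e l).concat h = gw G b e m :=
      Subtype.ext_iff.mp (hacyc.path_unique ⟨_, hpath⟩ ⟨_, gw_isPath G b e hacyc m⟩)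
    cases m with
    | nil =>
      exact absurd huniq (concat_ne_nil _ _)
    | cons n t =>
      right
      have : (gw G b e l).concat h = (gw G b e t).concat (gp_adj G b e n t) := huniq
      obtain ⟨hv, -⟩ := Walk.concat_inj this
      have : l = t := gp_inj G b e hacyc l t hv
      exact ⟨n, by rw [this]⟩
  · rw [concat_isPath_iff'] at hpath
    push_neg at hpath
    have hmem : (gp G b e m).1 ∈ (gw G b e l).support :=
      hpath (gw_isPath G b e hacyc l)
    obtain ⟨q, hq, heq⟩ :=
      exists_concat_of_adj_mem_support hacyc (gw_isPath G b e hacyc l) h hmem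
    have hqm : q = gw G b e m :=
      Subtype.ext_iff.mp (hacyc.path_unique ⟨_, hq⟩ ⟨_, gw_isPath G b e hacyc m⟩)
    subst hqm
    cases l with
    | nil => exact absurd heq.symm (concat_ne_nil _ _)
    | cons n t =>
      left
      have : (gw G b e t).concat (gp_adj G b e n t) = (gw G b e m).concat h.symm := heq
      obtain ⟨hv, -⟩ := Walk.concat_inj this
      have : t = m := gp_inj G b e hacyc t m hv
      exact ⟨n, by rw [this]⟩

end Tree

/-- The rooted tree on addresses. -/
def T : SimpleGraph (List ℕ) where
  Adj l m := (∃ n, l = n :: m) ∨ (∃ n, m = n :: l)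
  symm := ⟨fun l m h => Or.symm h⟩
  loopless := ⟨by
    intro l h
    rcases h with ⟨n, h⟩ | ⟨n, h⟩ <;>
      exact absurd (congrArg List.length h) (by simp)⟩

def tau (π : ℕ ≃ ℕ) : List ℕ → List ℕ
  | [] => []
  | n :: l => π n :: l

lemma tau_tau (π σ : ℕ ≃ ℕ) (h : ∀ n, π (σ n) = n) (l : List ℕ) :
    tau π (tau σ l) = l := by
  cases l with
  | nil => rfl
  | cons n l => simp [tau, h]

def sfun (π : ℕ ≃ ℕ) (l : List ℕ) : List ℕ := (tau π l.reverse).reverse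

lemma sfun_sfun (π σ : ℕ ≃ ℕ) (h : ∀ n, π (σ n) = n) (l : List ℕ) :
    sfun π (sfun σ l) = l := by
  simp [sfun, tau_tau π σ h]

lemma tau_append (π : ℕ ≃ ℕ) (r : List ℕ) (hr : r ≠ []) (n : ℕ) :
    tau π (r ++ [n]) = tau π r ++ [n] := by
  cases r with
  | nil => exact absurd rfl hr
  | cons m s => rfl

lemma sfun_cons (π : ℕ ≃ ℕ) (n : ℕ) (l : List ℕ) :
    ∃ k, sfun π (n :: l) = k :: sfun π l := by
  cases l with
  | nil => exact ⟨π n, rfl⟩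
  | cons m t =>
    refine ⟨n, ?_⟩
    have hr : (m :: t).reverse ≠ [] := by simp
    show (tau π (n :: m :: t).reverse).reverse = n :: (tau π (m :: t).reverse).reverse
    rw [show (n :: m :: t).reverse = (m :: t).reverse ++ [n] by simp,
      tau_append π _ hr n, List.reverse_append]
    rfl

lemma sfun_adj (π : ℕ ≃ ℕ) {l m : List ℕ} (h : T.Adj l m) :
    T.Adj (sfun π l) (sfun π m) := by
  rcases h with ⟨n, hn⟩ | ⟨n, hn⟩
  · subst hn
    obtain ⟨k, hk⟩ := sfun_cons π n m
    exact Or.inl ⟨k, hk⟩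
  · subst hn
    obtain ⟨k, hk⟩ := sfun_cons π n l
    exact Or.inr ⟨k, hk⟩

/-- The automorphism of the address tree permuting the first step by `π`. -/
def sIso (π : ℕ ≃ ℕ) : T ≃g T where
  toEquiv := ⟨sfun π, sfun π.symm,
    fun l => sfun_sfun π.symm π (fun n => π.symm_apply_apply n) l,
    fun l => sfun_sfun π π.symm (fun n => π.apply_symm_apply n) l⟩
  map_rel_iff' := by
    intro l m
    show T.Adj (sfun π l) (sfun π m) ↔ T.Adj l m
    constructor
    · intro h
      have h2 := sfun_adj π.symm h
      rwa [sfun_sfun π.symm π (fun n => π.symm_apply_apply n),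
        sfun_sfun π.symm π (fun n => π.symm_apply_apply n)] at h2
    · exact sfun_adj π

end TreeOrbitAux

open TreeOrbitAux in
/-- In a connected acyclic simple graph all of whose vertices have countably infinite
degree, for adjacent vertices `a`, `b`, the orbit of `a` under automorphisms fixing `b`
is infinite. -/
theorem tree_orbit_over_neighbor_infinite {V : Type*} (G : SimpleGraph V)
    (hconn : G.Connected) (hacyc : G.IsAcyclic)
    (hdeg : ∀ v : V, Countable (G.neighborSet v) ∧ Infinite (G.neighborSet v))
    (a b : V) (hab : G.Adj a b) :
    {x : V | ∃ f : G ≃g G, f b = b ∧ f a = x}.Infinite := by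
  classical
  -- choose enumerations of children
  have e : ∀ v p : V, ℕ ≃ ↥(G.neighborSet v \ {p}) := by
    intro v p
    have hC : (G.neighborSet v \ {p}).Countable := by
      have := (hdeg v).1
      exact (Set.countable_coe_iff.mp this).mono Set.diff_subset
    have hI : (G.neighborSet v \ {p}).Infinite := by
      have := (hdeg v).2
      exact (Set.infinite_coe_iff.mp this).diff (Set.finite_singleton p)
    haveI : Countable ↥(G.neighborSet v \ {p}) := hC.to_subtype
    haveI : Infinite ↥(G.neighborSet v \ {p}) := hI.to_subtype
    exact ((nonempty_denumerable ↥(G.neighborSet v \ {p})).some.eqv).symm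
  -- the isomorphism with the address tree
  have hbij : Function.Bijective (fun l => (gp G b e l).1) := by
    constructor
    · intro l m h
      exact gp_inj G b e hacyc l m h
    · intro v
      exact gp_surj G b e hacyc hconn v
  let Φ : T ≃g G :=
    { toEquiv := Equiv.ofBijective _ hbij
      map_rel_iff' := by
        intro l m
        constructor
        · intro h
          exact adj_reflect G b e hacyc h
        · intro h
          rcases h with ⟨n, hn⟩ | ⟨n, hn⟩
          · subst hn; exact (gp_adj G b e n m).symm
          · subst hn; exact gp_adj G b e n l }
  have hΦnil : Φ [] = b := rfl
  have hΦsymm_b : Φ.symm b = [] := by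
    rw [← hΦnil]
    exact Φ.symm_apply_apply []
  -- the address of a is a singleton
  obtain ⟨n₀, hn₀⟩ : ∃ n₀, Φ.symm a = [n₀] := by
    have hadj : T.Adj (Φ.symm a) [] := by
      rw [← Φ.map_rel_iff]
      have h1 : Φ (Φ.symm a) = a := Φ.apply_symm_apply a
      rw [h1, hΦnil]
      exact hab
    rcases hadj with ⟨n, hn⟩ | ⟨n, hn⟩
    · exact ⟨n, hn⟩
    · exact absurd (congrArg List.length hn) (by simp)
  -- build the automorphisms
  refine Set.infinite_of_injective_forall_mem
    (f := fun k : ℕ => (gp G b e [k]).1) ?_ ?_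
  · intro k k' h
    have := gp_inj G b e hacyc [k] [k'] h
    simpa using this
  · intro k
    refine ⟨(Φ.symm.trans ((sIso (Equiv.swap n₀ k)).trans Φ)), ?_, ?_⟩
    · show Φ (sfun (Equiv.swap n₀ k) (Φ.symm b)) = b
      rw [hΦsymm_b]
      exact hΦnil
    · show Φ (sfun (Equiv.swap n₀ k) (Φ.symm a)) = _
      rw [hn₀]
      have hsf : sfun (Equiv.swap n₀ k) [n₀] = [k] := by
        simp [sfun, tau, Equiv.swap_apply_left]
      rw [hsf]
      rfl
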